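/- Let P be a forcing poset with greatest lower bounds, N a set, and q a universal strongly N-generic condition. Then the function f: N ∩ P → P/q defined by f(p) = q ∧ p is a regular embedding. -/
import Mathlib


/-- Two conditions are compatible if they have a common lower bound. -/
def Compat {Q : Type*} [Preorder Q] (x y : Q) : Prop := ∃ z, z ≤ x ∧ z ≤ y

/-- Compatibility within a subposet `P`. -/
def CompatIn {Q : Type*} [Preorder Q] (P : Set Q) (x y : Q) : Prop :=
  ∃ z ∈ P, z ≤ x ∧ z ≤ y

/-- `A` is a maximal antichain of the subposet `P`. -/
def IsMaxAntichainIn {Q : Type*} [Preorder Q] (P A : Set Q) : Prop :=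
  A ⊆ P ∧ (∀ a ∈ A, ∀ b ∈ A, a ≠ b → ¬ CompatIn P a b) ∧
    ∀ p ∈ P, ∃ a ∈ A, CompatIn P p a

/-- `G` is a filter on the subposet `P`. -/
def IsFilterOn {Q : Type*} [Preorder Q] (P G : Set Q) : Prop :=
  G ⊆ P ∧ G.Nonempty ∧ (∀ p ∈ G, ∀ q ∈ P, p ≤ q → q ∈ G) ∧
    ∀ p ∈ G, ∀ q ∈ G, ∃ r ∈ G, r ≤ p ∧ r ≤ q

/-- `G` is a (V-)generic filter on the subposet `P`: it meets every
maximal antichain of `P` (all of which lie in the ground model `V`). -/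
def IsGenericOn {Q : Type*} [Preorder Q] (P G : Set Q) : Prop :=
  IsFilterOn P G ∧ ∀ A : Set Q, IsMaxAntichainIn P A → (G ∩ A).Nonempty

/-- `P` is a regular suborder of `Q`: elements of `P` compatible in `Q` are
compatible in `P`, and every maximal antichain of `P` is a maximal antichain of `Q`. -/
def IsRegularSuborder {Q : Type*} [Preorder Q] (P : Set Q) : Prop :=
  (∀ p ∈ P, ∀ q ∈ P, Compat p q → CompatIn P p q) ∧
    ∀ A : Set Q, IsMaxAntichainIn P A → IsMaxAntichainIn Set.univ A

/-- `q` is a strongly `N`-generic condition: every set `D` dense in the subposet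
`N ∩ Q` (here `N` denotes the trace `N ∩ Q`, a set of conditions) is predense
in `Q` below `q`. -/
def StronglyGeneric {Q : Type*} [Preorder Q] (N : Set Q) (q : Q) : Prop :=
  ∀ D : Set Q, D ⊆ N → (∀ p ∈ N, ∃ d ∈ D, d ≤ p) →
    ∀ r, r ≤ q → ∃ d ∈ D, Compat r d

/-- `P` has greatest lower bounds (`meet` on compatible pairs),
`N` is (the trace on `P` of) an elementary substructure `N ≺ (H(χ),∈,P)` --
whose relevant consequence is that elements of `N` compatible in `P` are
compatible in `N` -- and `q` is a universal strongly `N`-generic condition.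
Then `f : N ∩ P → P/q`, `f(p) = q ∧ p`, is a regular embedding: it maps into
`P/q = {r : r ≤ q}`, preserves order, reflects compatibility, and maps maximal
antichains of `N ∩ P` to maximal antichains of `P/q`. -/
theorem stmt_13 {P : Type*} [Preorder P]
    (meet : P → P → P)
    (hmeet : ∀ x y : P, Compat x y →
      meet x y ≤ x ∧ meet x y ≤ y ∧ ∀ z, z ≤ x → z ≤ y → z ≤ meet x y)
    (N : Set P) (q : P)
    (hq : StronglyGeneric N q) (hu : ∀ p ∈ N, Compat p q)
    (hN : ∀ p ∈ N, ∀ p' ∈ N, Compat p p' → CompatIn N p p') :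
    (∀ p ∈ N, meet q p ≤ q) ∧
    (∀ p ∈ N, ∀ p' ∈ N, p ≤ p' → meet q p ≤ meet q p') ∧
    (∀ p ∈ N, ∀ p' ∈ N,
      CompatIn {r | r ≤ q} (meet q p) (meet q p') → CompatIn N p p') ∧
    (∀ A : Set P, IsMaxAntichainIn N A →
      IsMaxAntichainIn {r | r ≤ q} ((fun p => meet q p) '' A)) := by
  have hqp : ∀ p ∈ N, Compat q p := fun p hp => by
    obtain ⟨z, hz1, hz2⟩ := hu p hp; exact ⟨z, hz2, hz1⟩
  have h1 : ∀ p ∈ N, meet q p ≤ q := fun p hp => (hmeet q p (hqp p hp)).1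
  have h2 : ∀ p ∈ N, meet q p ≤ p := fun p hp => (hmeet q p (hqp p hp)).2.1
  have h3 : ∀ p ∈ N, ∀ z, z ≤ q → z ≤ p → z ≤ meet q p := fun p hp =>
    (hmeet q p (hqp p hp)).2.2
  have refl : ∀ p ∈ N, ∀ p' ∈ N,
      CompatIn {r | r ≤ q} (meet q p) (meet q p') → CompatIn N p p' := by
    intro p hp p' hp' ⟨z, _, hz1, hz2⟩
    exact hN p hp p' hp' ⟨z, le_trans hz1 (h2 p hp), le_trans hz2 (h2 p' hp')⟩
  refine ⟨h1, ?_, refl, ?_⟩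
  · intro p hp p' hp' hpp'
    exact h3 p' hp' _ (h1 p hp) (le_trans (h2 p hp) hpp')
  · intro A ⟨hAN, hanti, hmax⟩
    refine ⟨?_, ?_, ?_⟩
    · rintro x ⟨a, ha, rfl⟩
      exact h1 a (hAN ha)
    · rintro x ⟨a, ha, rfl⟩ y ⟨b, hb, rfl⟩ hne hc
      rcases eq_or_ne a b with rfl | hab
      · exact hne rfl
      · exact hanti a ha b hb hab (refl a (hAN ha) b (hAN hb) hc)
    · intro r hr
      set D : Set P := {d | d ∈ N ∧ ∃ a ∈ A, d ≤ a} with hD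
      have hdense : ∀ p ∈ N, ∃ d ∈ D, d ≤ p := by
        intro p hp
        obtain ⟨a, ha, z, hzN, hz1, hz2⟩ := hmax p hp
        exact ⟨z, ⟨hzN, a, ha, hz2⟩, hz1⟩
      obtain ⟨d, ⟨hdN, a, ha, hda⟩, s, hs1, hs2⟩ := hq D (fun d hd => hd.1) hdense r hr
      have hsq : s ≤ q := le_trans hs1 hr
      refine ⟨meet q a, ⟨a, ha, rfl⟩, s, hsq, hs1,
        h3 a (hAN ha) s hsq (le_trans hs2 hda)⟩
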